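/- Let A = BBᵀ be an n×n real PSD matrix with ‖A‖_∞ ≤ 1, where B ∈ ℝ^{n×r}. Let S̄ = √(n/s)·S where S is a random diagonal 0/1 matrix whose diagonal entries are independent Bernoulli(s/n). Then E[‖Bᵀ S̄ S̄ᵀ B − Bᵀ B‖_F²] ≤ n²/s. -/

import Mathlib

open Matrix Finset MeasureTheory

/-- The scaled diagonal sampling matrix `S̄ = √(n/s)·S` associated with a Bernoulli
sample `ω : Fin n → Bool`. -/
noncomputable def sampleMatrix (n : ℕ) (s : ℝ) (ω : Fin n → Bool) :
    Matrix (Fin n) (Fin n) ℝ :=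
  Matrix.diagonal (fun i => if ω i then Real.sqrt ((n : ℝ) / s) else 0)

/-- **Approximate matrix multiplication bound.** Let `A = B * Bᵀ` be PSD with entries
bounded by `1` in magnitude. Sample each index independently with probability `s/n`,
giving the scaled sampling matrix `S̄`. Then
`E[‖Bᵀ S̄ S̄ᵀ B − Bᵀ B‖_F²] ≤ n²/s`. -/
theorem approx_matrix_mult_expectation
    (n r : ℕ) (s : ℝ) (B : Matrix (Fin n) (Fin r) ℝ)
    (hs : 0 < s) (hsn : s ≤ n)
    (hbound : ∀ i j, |(B * Bᵀ) i j| ≤ 1)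
    (hp : ENNReal.ofReal (s / n) ≤ 1)
    (μ : Measure (Fin n → Bool))
    (hμ : μ = Measure.pi (fun _ => (PMF.bernoulli (Real.toNNReal (s / n)) (ENNReal.coe_le_one_iff.mp hp)).toMeasure)) :
    (∫ ω, (∑ k : Fin r, ∑ l : Fin r,
        ((Bᵀ * sampleMatrix n s ω * (sampleMatrix n s ω)ᵀ * B - Bᵀ * B) k l) ^ 2) ∂μ)
      ≤ (n : ℝ) ^ 2 / s := by
  have hn : (0:ℝ) < n := lt_of_lt_of_le hs hsn
  letI : MeasureSpace Bool := ⟨(PMF.bernoulli (Real.toNNReal (s / n)) (ENNReal.coe_le_one_iff.mp hp)).toMeasure⟩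
  haveI hprob : IsProbabilityMeasure (volume : Measure Bool) :=
    PMF.toMeasure.isProbabilityMeasure _
  haveI : IsProbabilityMeasure (volume : Measure (Fin n → Bool)) := by
    rw [show (volume : Measure (Fin n → Bool)) = Measure.pi (fun _ => volume) from rfl]
    infer_instance
  have hμv : μ = (volume : Measure (Fin n → Bool)) := by rw [hμ]; rfl
  -- the centered weight function
  set g : Bool → ℝ := fun b => (if b then (n:ℝ)/s else 0) - 1 with hg
  -- single-coordinate measures
  have htrue : ((volume : Measure Bool) {true}).toReal = s / n := by
    show (((PMF.bernoulli (Real.toNNReal (s / n)) (ENNReal.coe_le_one_iff.mp hp)).toMeasure) {true}).toReal = _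
    rw [PMF.toMeasure_apply_singleton _ _ (measurableSet_singleton _)]
    simp [PMF.bernoulli_apply, Real.coe_toNNReal _ (by positivity : (0:ℝ) ≤ s / n)]
  have hfalse : ((volume : Measure Bool) {false}).toReal = 1 - s / n := by
    show (((PMF.bernoulli (Real.toNNReal (s / n)) (ENNReal.coe_le_one_iff.mp hp)).toMeasure) {false}).toReal = _
    rw [PMF.toMeasure_apply_singleton _ _ (measurableSet_singleton _)]
    simp only [PMF.bernoulli_apply, Bool.cond_false]
    rw [ENNReal.coe_toReal, NNReal.coe_sub (ENNReal.coe_le_one_iff.mp hp), NNReal.coe_one,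
      Real.coe_toNNReal _ (by positivity : (0:ℝ) ≤ s / n)]
  have hint : ∀ f : Bool → ℝ, (∫ b : Bool, f b) =
      (1 - s / n) * f false + (s / n) * f true := by
    intro f
    rw [integral_fintype Integrable.of_finite]
    simp only [measureReal_def, smul_eq_mul, Fintype.sum_bool, htrue, hfalse]
    ring
  have hsne : s ≠ 0 := ne_of_gt hs
  have hnne : (n:ℝ) ≠ 0 := ne_of_gt hn
  have I1 : (∫ b : Bool, g b) = 0 := by
    rw [hint]; simp only [hg]; simp; field_simp; ring
  have I2 : (∫ b : Bool, g b * g b) = (n:ℝ)/s - 1 := by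
    rw [hint]; simp only [hg]; simp; field_simp; ring
  -- cross-term integrals over the product measure
  have cross : ∀ i j : Fin n, (∫ ω : Fin n → Bool, g (ω i) * g (ω j)) =
      if i = j then (n:ℝ)/s - 1 else 0 := by
    intro i j
    have hprod : ∀ ω : Fin n → Bool, g (ω i) * g (ω j)
        = ∏ t, ((if t = i then g (ω t) else 1) * (if t = j then g (ω t) else 1)) := by
      intro ω
      rw [Finset.prod_mul_distrib, Finset.prod_ite_eq', Finset.prod_ite_eq']
      simp
    simp_rw [hprod]
    rw [show (volume : Measure (Fin n → Bool)) = Measure.pi (fun _ => volume) from rfl,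
      MeasureTheory.integral_fintype_prod_eq_prod
        (f := fun t b => (if t = i then g b else 1) * (if t = j then g b else 1))]
    have hfac : ∀ t : Fin n, (∫ b : Bool, (if t = i then g b else 1) * (if t = j then g b else 1))
        = if t = i then (if t = j then (n:ℝ)/s - 1 else 0)
          else (if t = j then 0 else 1) := by
      intro t
      by_cases h1 : t = i
      · subst h1
        by_cases h2 : t = j
        · subst h2
          simp only [eq_self_iff_true, if_true]
          exact I2
        · simp only [eq_self_iff_true, if_true, if_neg h2, mul_one]
          exact I1
      · by_cases h2 : t = j
        · subst h2
          simp only [eq_self_iff_true, if_true, if_neg h1, one_mul]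
          exact I1
        · simp only [if_neg h1, if_neg h2, mul_one]
          rw [MeasureTheory.integral_const]
          simp only [smul_eq_mul, mul_one, measureReal_def, measure_univ, ENNReal.toReal_one]
    simp_rw [hfac]
    by_cases hij : i = j
    · subst hij
      have : ∀ t : Fin n, (if t = i then (if t = i then (n:ℝ)/s - 1 else 0)
          else (if t = i then 0 else 1)) = if t = i then (n:ℝ)/s - 1 else 1 := by
        intro t; by_cases h : t = i <;> simp [h]
      simp_rw [this]
      rw [Finset.prod_ite_eq']
      simp
    · rw [if_neg hij]
      apply Finset.prod_eq_zero (Finset.mem_univ i)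
      simp [hij, Ne.symm]
  -- rewrite the matrix entry
  have entry : ∀ (ω : Fin n → Bool) (k l : Fin r),
      ((Bᵀ * sampleMatrix n s ω * (sampleMatrix n s ω)ᵀ * B - Bᵀ * B) k l)
        = ∑ i, g (ω i) * (B i k * B i l) := by
    intro ω k l
    have hdd : sampleMatrix n s ω * (sampleMatrix n s ω)ᵀ
        = Matrix.diagonal (fun i => if ω i then (n:ℝ)/s else 0) := by
      rw [sampleMatrix, Matrix.diagonal_transpose, Matrix.diagonal_mul_diagonal]
      refine congrArg Matrix.diagonal (funext fun i => ?_)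
      split_ifs with h
      · exact Real.mul_self_sqrt (by positivity)
      · simp
    rw [Matrix.mul_assoc (Bᵀ) _ _, hdd]
    simp only [Matrix.sub_apply, Matrix.mul_apply, Matrix.transpose_apply,
      Matrix.diagonal_apply, mul_ite, mul_zero, ite_mul, zero_mul,
      Finset.sum_ite_eq, Finset.sum_ite_eq', Finset.mem_univ, if_true]
    rw [← Finset.sum_sub_distrib]
    apply Finset.sum_congr rfl
    intro i _
    simp only [hg]
    split_ifs <;> ring
  rw [hμv]
  simp_rw [entry]
  -- push the integral inside the finite sums
  rw [integral_finset_sum _ (fun k _ => Integrable.of_finite)]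
  have step : ∀ k : Fin r,
      (∫ ω : Fin n → Bool, ∑ l : Fin r, (∑ i, g (ω i) * (B i k * B i l)) ^ 2)
        = ∑ l : Fin r, ∑ i : Fin n, ((n:ℝ)/s - 1) * (B i k * B i l) ^ 2 := by
    intro k
    rw [integral_finset_sum _ (fun l _ => Integrable.of_finite)]
    apply Finset.sum_congr rfl
    intro l _
    have expand : ∀ ω : Fin n → Bool, (∑ i, g (ω i) * (B i k * B i l)) ^ 2
        = ∑ i, ∑ j, (B i k * B i l) * (B j k * B j l) * (g (ω i) * g (ω j)) := by
      intro ω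
      rw [sq, Finset.sum_mul_sum]
      apply Finset.sum_congr rfl; intro i _
      apply Finset.sum_congr rfl; intro j _
      ring
    simp_rw [expand]
    rw [integral_finset_sum _ (fun i _ => Integrable.of_finite)]
    have : ∀ i : Fin n,
        (∫ ω : Fin n → Bool, ∑ j, (B i k * B i l) * (B j k * B j l) * (g (ω i) * g (ω j)))
        = ((n:ℝ)/s - 1) * (B i k * B i l) ^ 2 := by
      intro i
      rw [integral_finset_sum _ (fun j _ => Integrable.of_finite)]
      have hj : ∀ j : Fin n,
          (∫ ω : Fin n → Bool, (B i k * B i l) * (B j k * B j l) * (g (ω i) * g (ω j)))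
          = (B i k * B i l) * (B j k * B j l) * (if i = j then (n:ℝ)/s - 1 else 0) := by
        intro j
        rw [MeasureTheory.integral_const_mul, cross i j]
      simp_rw [hj]
      rw [Finset.sum_eq_single i]
      · simp [sq]; ring
      · intro j _ hji; simp [Ne.symm hji]
      · intro h; exact absurd (Finset.mem_univ i) h
    simp_rw [this]
  simp_rw [step]
  -- final bound
  have hdiag : ∀ i : Fin n, ∑ k : Fin r, (B i k) ^ 2 ≤ 1 := by
    intro i
    have := hbound i i
    rw [Matrix.mul_apply] at this
    simp only [Matrix.transpose_apply] at this
    calc ∑ k : Fin r, (B i k) ^ 2 = ∑ k : Fin r, B i k * B i k := by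
          apply Finset.sum_congr rfl; intro k _; ring
      _ ≤ |∑ k : Fin r, B i k * B i k| := le_abs_self _
      _ ≤ 1 := this
  have hV : (0:ℝ) ≤ (n:ℝ)/s - 1 := by
    rw [sub_nonneg, le_div_iff₀ hs, one_mul]; exact hsn
  have rearr : ∑ k : Fin r, ∑ l : Fin r, ∑ i : Fin n, ((n:ℝ)/s - 1) * (B i k * B i l) ^ 2
      = ((n:ℝ)/s - 1) * ∑ i : Fin n, (∑ k : Fin r, (B i k) ^ 2) ^ 2 := by
    rw [Finset.mul_sum]
    calc ∑ k : Fin r, ∑ l : Fin r, ∑ i : Fin n, ((n:ℝ)/s - 1) * (B i k * B i l) ^ 2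
        = ∑ k : Fin r, ∑ i : Fin n, ∑ l : Fin r, ((n:ℝ)/s - 1) * (B i k * B i l) ^ 2 :=
          Finset.sum_congr rfl (fun k _ => Finset.sum_comm)
      _ = ∑ i : Fin n, ∑ k : Fin r, ∑ l : Fin r, ((n:ℝ)/s - 1) * (B i k * B i l) ^ 2 :=
          Finset.sum_comm
      _ = ∑ i : Fin n, ((n:ℝ)/s - 1) * (∑ k : Fin r, (B i k) ^ 2) ^ 2 := by
          apply Finset.sum_congr rfl
          intro i _
          rw [sq (∑ k : Fin r, (B i k) ^ 2), Finset.sum_mul_sum, Finset.mul_sum]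
          apply Finset.sum_congr rfl
          intro k _
          rw [Finset.mul_sum]
          apply Finset.sum_congr rfl
          intro l _
          ring
  rw [rearr]
  have hsumle : ∑ i : Fin n, (∑ k : Fin r, (B i k) ^ 2) ^ 2 ≤ (n:ℝ) := by
    calc ∑ i : Fin n, (∑ k : Fin r, (B i k) ^ 2) ^ 2 ≤ ∑ _i : Fin n, (1:ℝ) := by
          apply Finset.sum_le_sum
          intro i _
          have h0 : (0:ℝ) ≤ ∑ k : Fin r, (B i k) ^ 2 :=
            Finset.sum_nonneg fun k _ => sq_nonneg _
          calc (∑ k : Fin r, (B i k) ^ 2) ^ 2 ≤ 1 ^ 2 := by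
                apply pow_le_pow_left₀ h0 (hdiag i)
            _ = 1 := one_pow 2
      _ = (n:ℝ) := by simp
  calc ((n:ℝ)/s - 1) * ∑ i : Fin n, (∑ k : Fin r, (B i k) ^ 2) ^ 2
      ≤ ((n:ℝ)/s - 1) * (n:ℝ) := by
        exact mul_le_mul_of_nonneg_left hsumle hV
    _ ≤ (n : ℝ) ^ 2 / s := by
        rw [sub_mul, div_mul_eq_mul_div, ← sq]
        linarith
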